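/- Let N ≥ 1, let r ∈ ℝ^N have all coordinates positive, and let Λ be a real N×N positive semidefinite matrix such that for every x ∈ ℝ^N, Λ.mulVec x = 0 if and only if x = t • r for some t ∈ ℝ. Let R be the diagonal matrix with diagonal entries r₁,…,r_N and set L := Λ * R. Then for every x ∈ ℝ^N, Lᵀ.mulVec x = 0 if and only if x = t • r for some t ∈ ℝ; in particular the matrix equation Lᵀx = 0 has, up to scaling, the unique nonzero solution x = r. -/
import Mathlib

open Matrix

/-- For the discrete dual-Laplacian `L = Λ R` (with `R = diag(r)`), the kernel of `Lᵀ`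
is exactly the span of `r`: the equation `Lᵀ x = 0` has the unique nonzero solution
`x = t • r` up to scaling. -/
theorem stmt_3 {N : ℕ} (hN : 1 ≤ N) (r : Fin N → ℝ) (hr : ∀ i, 0 < r i)
    (Λ : Matrix (Fin N) (Fin N) ℝ) (hΛ : Λ.PosSemidef)
    (hker : ∀ x : Fin N → ℝ, Λ.mulVec x = 0 ↔ ∃ t : ℝ, x = t • r)
    (L : Matrix (Fin N) (Fin N) ℝ) (hL : L = Λ * Matrix.diagonal r) :
    ∀ x : Fin N → ℝ, Lᵀ.mulVec x = 0 ↔ ∃ t : ℝ, x = t • r := by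
  intro x
  have hΛsym : Λᵀ = Λ := hΛ.1
  have hLT : Lᵀ = Matrix.diagonal r * Λ := by
    rw [hL, transpose_mul, diagonal_transpose, hΛsym]
  rw [hLT, ← mulVec_mulVec, ← hker x]
  constructor
  · intro h
    funext i
    have := congrFun h i
    simpa [mulVec_diagonal] using (mul_eq_zero.mp (by simpa [mulVec_diagonal] using this)).resolve_left (hr i).ne'
  · intro h
    rw [h, mulVec_zero]
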